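/- Let c > 0, Λ0 ∈ SO(3), and M a real 3×3 matrix. Define L(ε) = c Λ0 + ε M for ε ∈ ℝ. Suppose S : ℝ → ℝ^{3×3} is differentiable at 0 and satisfies, for all ε in a neighborhood of 0, that S(ε) is symmetric positive semidefinite and S(ε)·S(ε) = L(ε)ᵀ L(ε). Then the map V : ε ↦ (S(ε))⁻¹ is differentiable at ε = 0 with V(0) = c⁻¹ I and derivative V′(0) = −(1/(2c²)) (Mᵀ Λ0 + Λ0ᵀ M). -/

import Mathlib

open Matrix

/-- `SO3 A` means `A` is a real 3×3 special orthogonal matrix. -/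
def SO3 (A : Matrix (Fin 3) (Fin 3) ℝ) : Prop :=
  Aᵀ * A = 1 ∧ A.det = 1

attribute [local instance] Matrix.normedAddCommGroup Matrix.normedSpace

lemma aux_entry {f : ℝ → Matrix (Fin 3) (Fin 3) ℝ} {f' : Matrix (Fin 3) (Fin 3) ℝ} {x : ℝ}
    (hf : HasDerivAt f f' x) (i j : Fin 3) :
    HasDerivAt (fun ε => f ε i j) (f' i j) x :=
  hasDerivAt_pi.1 (hasDerivAt_pi.1 hf i) j

lemma aux_mul {f g : ℝ → Matrix (Fin 3) (Fin 3) ℝ} {f' g' : Matrix (Fin 3) (Fin 3) ℝ} {x : ℝ}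
    (hf : HasDerivAt f f' x) (hg : HasDerivAt g g' x) :
    HasDerivAt (fun ε => f ε * g ε) (f' * g x + f x * g') x := by
  refine hasDerivAt_pi.2 ?_
  intro i
  refine hasDerivAt_pi.2 ?_
  intro j
  have hmm : ∀ ε, (f ε * g ε) i j = ∑ k, f ε i k * g ε k j := fun ε => Matrix.mul_apply
  simp only [hmm]
  have h := HasDerivAt.sum (u := Finset.univ) (A := fun k ε => f ε i k * g ε k j)
    (A' := fun k => f' i k * g x k j + f x i k * g' k j)
    (fun k _ => ((aux_entry hf i k).mul (aux_entry hg k j)))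
  convert h using 1
  · funext ε; simp [Finset.sum_apply]
  refine (congrArg₂ (fun a b : ℝ => a + b) (Matrix.mul_apply (M := f') (N := g x) (i := i) (k := j))
    (Matrix.mul_apply (M := f x) (N := g') (i := i) (k := j))).trans ?_
  simp [Finset.sum_add_distrib]

lemma aux_transpose {g : ℝ → Matrix (Fin 3) (Fin 3) ℝ} {g' : Matrix (Fin 3) (Fin 3) ℝ} {x : ℝ}
    (hg : HasDerivAt g g' x) :
    HasDerivAt (fun ε => (g ε)ᵀ) g'ᵀ x := by
  refine hasDerivAt_pi.2 ?_; intro i; refine hasDerivAt_pi.2 ?_; intro j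
  exact aux_entry hg j i

theorem statement4 (c : ℝ) (hc : 0 < c) (Λ0 M : Matrix (Fin 3) (Fin 3) ℝ)
    (hΛ0 : SO3 Λ0) (S : ℝ → Matrix (Fin 3) (Fin 3) ℝ)
    (hSdiff : DifferentiableAt ℝ S 0)
    (hS : ∀ᶠ ε in nhds (0 : ℝ), (S ε).PosSemidef ∧
      S ε * S ε = (c • Λ0 + ε • M)ᵀ * (c • Λ0 + ε • M)) :
    DifferentiableAt ℝ (fun ε : ℝ => (S ε)⁻¹) 0 ∧
    (S 0)⁻¹ = c⁻¹ • (1 : Matrix (Fin 3) (Fin 3) ℝ) ∧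
    deriv (fun ε : ℝ => (S ε)⁻¹) 0
      = (-(1 / (2 * c ^ 2))) • (Mᵀ * Λ0 + Λ0ᵀ * M) := by
  obtain ⟨hpsd0, heq0⟩ := hS.self_of_nhds
  -- S 0 = c • 1
  have hc2 : S 0 * S 0 = (c^2) • (1 : Matrix (Fin 3) (Fin 3) ℝ) := by
    rw [heq0]
    simp [Matrix.transpose_smul, Matrix.smul_mul, Matrix.mul_smul, hΛ0.1, smul_smul, pow_two]
  have hpsd1 : ((c:ℝ) • (1 : Matrix (Fin 3) (Fin 3) ℝ)).PosSemidef := by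
    refine posSemidef_iff_dotProduct_mulVec.2 ⟨?_, ?_⟩
    · simp [Matrix.IsHermitian]
    · intro x
      simp only [Matrix.smul_mulVec, Matrix.one_mulVec, dotProduct_smul]
      exact smul_nonneg hc.le (dotProduct_star_self_nonneg x)
  have hB : ((c^2) • (1 : Matrix (Fin 3) (Fin 3) ℝ)).PosSemidef := by
    refine posSemidef_iff_dotProduct_mulVec.2 ⟨?_, ?_⟩
    · simp [Matrix.IsHermitian]
    · intro x
      simp only [Matrix.smul_mulVec, Matrix.one_mulVec, dotProduct_smul]
      exact smul_nonneg (sq_nonneg c) (dotProduct_star_self_nonneg x)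
  have hS0 : S 0 = c • 1 := by
    have h1 : S 0 ^ 2 = (c^2) • (1 : Matrix (Fin 3) (Fin 3) ℝ) := by rw [pow_two]; exact hc2
    have h2 : ((c:ℝ) • (1 : Matrix (Fin 3) (Fin 3) ℝ)) ^ 2 = (c^2) • 1 := by
      rw [pow_two]; simp [Matrix.smul_mul, Matrix.mul_smul, smul_smul, pow_two]
    open scoped MatrixOrder in rw [← CFC.sqrt_sq (S 0) hpsd0.nonneg, ← CFC.sqrt_sq ((c:ℝ) • (1 : Matrix (Fin 3) (Fin 3) ℝ)) hpsd1.nonneg, h1, h2]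
  -- entrywise differentiability
  have hD : HasDerivAt S (deriv S 0) 0 := hSdiff.hasDerivAt
  have hent : ∀ i j : Fin 3, DifferentiableAt ℝ (fun ε => S ε i j) 0 :=
    fun i j => (aux_entry hD i j).differentiableAt
  have htriple : ∀ i j k l m n : Fin 3,
      DifferentiableAt ℝ (fun ε => S ε i j * S ε k l * S ε m n) 0 :=
    fun i j k l m n => ((hent i j).mul (hent k l)).mul (hent m n)
  have hdet : DifferentiableAt ℝ (fun ε => (S ε).det) 0 := by
    simp only [Matrix.det_fin_three]
    exact (((((htriple _ _ _ _ _ _).sub (htriple _ _ _ _ _ _)).sub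
      (htriple _ _ _ _ _ _)).add (htriple _ _ _ _ _ _)).add
      (htriple _ _ _ _ _ _)).sub (htriple _ _ _ _ _ _)
  have hdet0 : (S 0).det = c^3 := by
    rw [hS0, Matrix.det_smul]; simp
  have hdetne : (S 0).det ≠ 0 := by rw [hdet0]; positivity
  have hadj : DifferentiableAt ℝ (fun ε => (S ε).adjugate) 0 := by
    refine differentiableAt_pi.2 ?_; intro i; refine differentiableAt_pi.2 ?_; intro j
    have key : ∀ i j : Fin 3, DifferentiableAt ℝ (fun ε => (S ε).adjugate i j) 0 := by
      intro i j
      fin_cases i <;> fin_cases j <;>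
        simp only [Matrix.adjugate_fin_three, Matrix.cons_val', Matrix.cons_val_zero,
          Matrix.cons_val_one, Matrix.head_cons, Matrix.empty_val', Matrix.cons_val_fin_one,
          Matrix.head_fin_const, Matrix.cons_val_two, Matrix.tail_cons] <;>
        first
          | exact ((hent _ _).mul (hent _ _)).sub ((hent _ _).mul (hent _ _))
          | exact (((hent _ _).mul (hent _ _)).neg).add ((hent _ _).mul (hent _ _))
    exact key i j
  have hVdef : (fun ε => (S ε)⁻¹) = fun ε => ((S ε).det)⁻¹ • (S ε).adjugate := by
    funext ε; rw [Matrix.inv_def, Ring.inverse_eq_inv']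
  have hVdiff : DifferentiableAt ℝ (fun ε : ℝ => (S ε)⁻¹) 0 := by
    rw [hVdef]
    exact (hdet.inv hdetne).smul hadj
  have hV0 : (S 0)⁻¹ = c⁻¹ • (1 : Matrix (Fin 3) (Fin 3) ℝ) := by
    apply Matrix.inv_eq_right_inv
    rw [hS0]
    rw [Matrix.smul_mul, Matrix.mul_smul, smul_smul, mul_inv_cancel₀ hc.ne', one_smul, one_mul]
  refine ⟨hVdiff, hV0, ?_⟩
  -- derivative of RHS
  have hL : HasDerivAt (fun ε : ℝ => c • Λ0 + ε • M) M 0 := by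
    have h1 : HasDerivAt (fun ε : ℝ => ε • M) M 0 := by
      have h0 := (hasDerivAt_id (0:ℝ)).smul_const M; simp only [id, one_smul] at h0; exact h0
    exact h1.const_add (c • Λ0)
  have hRHS : HasDerivAt (fun ε : ℝ => (c • Λ0 + ε • M)ᵀ * (c • Λ0 + ε • M))
      (Mᵀ * (c • Λ0) + (c • Λ0)ᵀ * M) 0 := by
    have h := aux_mul (aux_transpose hL) hL
    simpa using h
  have hSS : HasDerivAt (fun ε => S ε * S ε) (deriv S 0 * S 0 + S 0 * deriv S 0) 0 :=
    aux_mul hD hD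
  have hEq : deriv S 0 * S 0 + S 0 * deriv S 0 = Mᵀ * (c • Λ0) + (c • Λ0)ᵀ * M := by
    have hfe : (fun ε : ℝ => (c • Λ0 + ε • M)ᵀ * (c • Λ0 + ε • M)) =ᶠ[nhds (0:ℝ)]
        (fun ε => S ε * S ε) := hS.mono fun ε h => h.2.symm
    exact (hSS.congr_of_eventuallyEq hfe).unique hRHS
  -- deriv S 0 = (1/2) • X
  set X := Mᵀ * Λ0 + Λ0ᵀ * M with hX
  have hD_val : deriv S 0 = (1/2 : ℝ) • X := by
    have h1 : (2*c) • deriv S 0 = c • X := by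
      have := hEq
      rw [hS0] at this
      rw [Matrix.mul_smul, Matrix.smul_mul, mul_one, one_mul] at this
      rw [hX, smul_add]
      rw [Matrix.mul_smul, Matrix.transpose_smul, Matrix.smul_mul] at this
      calc (2*c) • deriv S 0 = c • deriv S 0 + c • deriv S 0 := by
            rw [← add_smul]; ring_nf
        _ = c • (Mᵀ * Λ0) + c • (Λ0ᵀ * M) := this
    have h2 : deriv S 0 = (2*c)⁻¹ • ((2*c) • deriv S 0) := by
      rw [smul_smul, inv_mul_cancel₀ (by positivity), one_smul]
    rw [h2, h1, smul_smul]
    congr 1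
    field_simp
  -- the inverse equation
  have hV' : HasDerivAt (fun ε : ℝ => (S ε)⁻¹) (deriv (fun ε : ℝ => (S ε)⁻¹) 0) 0 :=
    hVdiff.hasDerivAt
  have hSV : HasDerivAt (fun ε => S ε * (S ε)⁻¹)
      (deriv S 0 * (S 0)⁻¹ + S 0 * deriv (fun ε : ℝ => (S ε)⁻¹) 0) 0 := aux_mul hD hV'
  have hone : (fun ε => S ε * (S ε)⁻¹) =ᶠ[nhds (0:ℝ)] (fun _ => (1 : Matrix (Fin 3) (Fin 3) ℝ)) := by
    have hdne : ∀ᶠ ε in nhds (0:ℝ), (S ε).det ≠ 0 :=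
      hdet.continuousAt.eventually_ne hdetne
    exact hdne.mono fun ε h => Matrix.mul_nonsing_inv _ (isUnit_iff_ne_zero.2 h)
  have hzero : deriv S 0 * (S 0)⁻¹ + S 0 * deriv (fun ε : ℝ => (S ε)⁻¹) 0 = 0 :=
    (hSV.congr_of_eventuallyEq hone.symm).unique (hasDerivAt_const 0 1)
  -- solve for deriv V 0
  rw [hV0, hS0, hD_val] at hzero
  rw [Matrix.smul_mul, Matrix.mul_smul, mul_one, smul_smul, Matrix.smul_mul, one_mul] at hzero
  have hcV : c • deriv (fun ε : ℝ => (S ε)⁻¹) 0 = -((1/2 * c⁻¹) • X) :=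
    eq_neg_of_add_eq_zero_right hzero
  calc deriv (fun ε : ℝ => (S ε)⁻¹) 0
      = c⁻¹ • (c • deriv (fun ε : ℝ => (S ε)⁻¹) 0) := (inv_smul_smul₀ hc.ne' _).symm
    _ = c⁻¹ • (-((1/2 * c⁻¹) • X)) := by rw [hcV]
    _ = (-(1 / (2 * c ^ 2))) • X := by
        rw [smul_neg, smul_smul, ← neg_smul]
        congr 1
        field_simp
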